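/- A subshift X ⊆ Σ^G has topological strong spatial mixing (with some gap n) if and only if X is uniformly avo for the family of all subsets of G \ {e} (with some common avoradius). -/

import Mathlib

open scoped Pointwise

/-- `B` is a determining set for `C`. -/
def IsDetermining {G A : Type*} [Group G] (X : Set (G → A)) (C B : Set G) : Prop :=
  ∀ x : G → A, (∃ w ∈ X, ∀ g ∈ C, w g = x g) →
    ∀ a : A, (∃ w ∈ X, (∀ g ∈ B, w g = x g) ∧ w 1 = a) ↔
      (∃ w ∈ X, (∀ g ∈ C, w g = x g) ∧ w 1 = a)

/-- Topological strong spatial mixing with gap `n` (word metric given by the ball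
`S ^ k`): for all pairwise disjoint finite `U, V, W ⊆ G` with `d(U, V) ≥ n`, if the
patterns `u ⊔ s` (on `U ∪ W`) and `s ⊔ v` (on `W ∪ V`) of a configuration are globally
valid then so is `u ⊔ s ⊔ v` (on `U ∪ W ∪ V`). -/
def TSSM {G A : Type*} [Group G] (X : Set (G → A)) (S : Set G) (n : ℕ) : Prop :=
  ∀ U V W : Set G, U.Finite → V.Finite → W.Finite →
    Disjoint U V → Disjoint U W → Disjoint V W →
    (∀ u ∈ U, ∀ v ∈ V, ∀ k : ℕ, k < n → u⁻¹ * v ∉ S ^ k) →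
    ∀ w : G → A, (∃ p ∈ X, ∀ g ∈ U ∪ W, p g = w g) →
      (∃ p ∈ X, ∀ g ∈ W ∪ V, p g = w g) →
      ∃ p ∈ X, ∀ g ∈ U ∪ W ∪ V, p g = w g

private lemma pow_subset_pow_of_le {G : Type*} [Group G] {S : Set G} (hS1 : (1 : G) ∈ S)
    {k m : ℕ} (h : k ≤ m) : S ^ k ⊆ S ^ m := by
  induction h with
  | refl => exact subset_rfl
  | step _ ih =>
    rename_i m' _
    intro x hx
    have : x * 1 ∈ S ^ m' * S := Set.mul_mem_mul (ih hx) hS1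
    simpa [pow_succ] using this

private lemma inv_mem_pow {G : Type*} [Group G] {S : Set G} (hSinv : S⁻¹ = S)
    {k : ℕ} {x : G} (hx : x ∈ S ^ k) : x⁻¹ ∈ S ^ k := by
  have : (S ^ k)⁻¹ = S ^ k := by rw [← inv_pow, hSinv]
  rw [← this]
  simpa using hx

/-- A subshift has topological strong spatial mixing (with some gap `n`) if and only if
it is uniformly avo for the family of all subsets of `G \ {e}` (with some common
avoradius). -/
theorem tssm_iff_uniformly_avo {G A : Type*} [Group G] [Finite A]
    [TopologicalSpace A] [DiscreteTopology A]
    (S : Set G) (hS1 : (1 : G) ∈ S) (hSinv : S⁻¹ = S) (hSfin : S.Finite)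
    (hSgen : ∀ g : G, ∃ n : ℕ, g ∈ S ^ n)
    (X : Set (G → A)) (hclosed : IsClosed X)
    (hshift : ∀ g : G, ∀ x ∈ X, (fun h => x (g⁻¹ * h)) ∈ X) :
    (∃ n : ℕ, TSSM X S n) ↔
    (∃ n : ℕ, ∀ C : Set G, (1 : G) ∉ C → IsDetermining X C (C ∩ S ^ n)) := by
  constructor
  · rintro ⟨n, htssm⟩
    refine ⟨n, fun C h1C x hx a => ?_⟩
    constructor
    · rintro ⟨w', hw'X, hw'B, hw'1⟩
      obtain ⟨w0, hw0X, hw0⟩ := hx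
      classical
      -- the target configuration
      set y : G → A := fun g => if g = 1 then a else x g with hy
      -- for every finite subset of C there is a point of X matching y on it and at 1
      have key : ∀ F : Finset G, ∃ p ∈ X, p 1 = a ∧ ∀ g ∈ (↑F : Set G) ∩ C, p g = x g := by
        intro F
        set T : Set G := (↑F : Set G) ∩ C with hT
        have hTfin : T.Finite := (F.finite_toSet).inter_of_left _
        have h1T : (1 : G) ∉ T := fun h => h1C h.2
        have := htssm (T \ S ^ n) {1} (T ∩ S ^ n)
          (hTfin.subset Set.diff_subset) (Set.finite_singleton 1)
          (hTfin.subset Set.inter_subset_left)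
          (Set.disjoint_singleton_right.mpr (fun h => h1T h.1))
          (by
            rw [Set.disjoint_left]
            rintro g ⟨_, hgn⟩ ⟨_, hgn'⟩
            exact hgn hgn')
          (Set.disjoint_singleton_left.mpr (fun h => h1T h.1))
          (by
            rintro u ⟨_, hun⟩ v hv k hk hmem
            rcases hv with rfl
            rw [mul_one] at hmem
            exact hun (pow_subset_pow_of_le hS1 hk.le (by simpa using inv_mem_pow hSinv hmem)))
          y
          (by
            refine ⟨w0, hw0X, fun g hg => ?_⟩
            rw [Set.diff_union_inter] at hg
            have hgC : g ∈ C := hg.2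
            have : g ≠ 1 := fun h => h1C (h ▸ hgC)
            simp [hy, this, hw0 g hgC])
          (by
            refine ⟨w', hw'X, fun g hg => ?_⟩
            rcases hg with hg | hg
            · have hgC : g ∈ C := hg.1.2
              have : g ≠ 1 := fun h => h1C (h ▸ hgC)
              simp [hy, this, hw'B g ⟨hgC, hg.2⟩]
            · rcases hg with rfl
              simp [hy, hw'1])
        obtain ⟨p, hpX, hp⟩ := this
        rw [Set.diff_union_inter] at hp
        refine ⟨p, hpX, ?_, fun g hg => ?_⟩
        · have := hp 1 (Or.inr rfl)
          simpa [hy] using this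
        · have hgC : g ∈ C := hg.2
          have hne : g ≠ 1 := fun h => h1C (h ▸ hgC)
          have := hp g (Or.inl hg)
          simpa [hy, hne] using this
      -- compactness
      classical
      set Z : Finset G → Set (G → A) :=
        fun F => {p | p ∈ X ∧ p 1 = a ∧ ∀ g ∈ (↑F : Set G) ∩ C, p g = x g} with hZ
      have hZclosed : ∀ F, IsClosed (Z F) := by
        intro F
        have h1 : IsClosed {p : G → A | p 1 = a} :=
          isClosed_singleton.preimage (continuous_apply (1 : G))
        have h2 : IsClosed {p : G → A | ∀ g ∈ (↑F : Set G) ∩ C, p g = x g} := by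
          have : {p : G → A | ∀ g ∈ (↑F : Set G) ∩ C, p g = x g} =
              ⋂ g ∈ (↑F : Set G) ∩ C, {p : G → A | p g = x g} := by
            ext p; simp
          rw [this]
          exact isClosed_biInter fun g _ =>
            isClosed_singleton.preimage (continuous_apply g)
        have : Z F = X ∩ ({p : G → A | p 1 = a} ∩
            {p : G → A | ∀ g ∈ (↑F : Set G) ∩ C, p g = x g}) := by
          ext p
          simp only [hZ, Set.mem_setOf_eq, Set.mem_inter_iff]
        rw [this]
        exact hclosed.inter (h1.inter h2)
      have hZcompact : ∀ F, IsCompact (Z F) := fun F =>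
        (hZclosed F).isCompact
      have hZne : ∀ F, (Z F).Nonempty := by
        intro F
        obtain ⟨p, hpX, hp1, hp⟩ := key F
        exact ⟨p, hpX, hp1, hp⟩
      have hdir : Directed (· ⊇ ·) Z := by
        intro F1 F2
        refine ⟨F1 ∪ F2, ?_, ?_⟩ <;>
        · rintro p ⟨hpX, hp1, hp⟩
          refine ⟨hpX, hp1, fun g hg => hp g ⟨?_, hg.2⟩⟩
          simp only [Finset.coe_union, Set.mem_union]
          first
          | exact Or.inl hg.1
          | exact Or.inr hg.1
      obtain ⟨p, hp⟩ := IsCompact.nonempty_iInter_of_directed_nonempty_isCompact_isClosed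
        Z hdir hZne hZcompact hZclosed
      simp only [Set.mem_iInter] at hp
      have hpX : p ∈ X := (hp ∅).1
      refine ⟨p, hpX, fun g hg => ?_, (hp ∅).2.1⟩
      exact (hp {g}).2.2 g ⟨by simp, hg⟩
    · rintro ⟨w', hw'X, hw'C, hw'1⟩
      exact ⟨w', hw'X, fun g hg => hw'C g hg.1, hw'1⟩
  · rintro ⟨n, hdet⟩
    refine ⟨n + 1, ?_⟩
    intro U V W hU hV hW hUV hUW hVW hsep w hp1 hp2
    classical
    obtain ⟨p2, hp2X, hp2e⟩ := hp2
    -- add points of V one by one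
    suffices h : ∀ F : Finset G, (↑F : Set G) ⊆ V →
        ∃ p ∈ X, ∀ g ∈ U ∪ W ∪ (↑F : Set G), p g = w g by
      obtain ⟨p, hpX, hp⟩ := h hV.toFinset (by simp)
      refine ⟨p, hpX, fun g hg => hp g ?_⟩
      simpa [hV.coe_toFinset] using hg
    intro F
    induction F using Finset.induction_on with
    | empty =>
      intro _
      obtain ⟨p1, hp1X, hp1e⟩ := hp1
      exact ⟨p1, hp1X, fun g hg => by
        rcases hg with hg | hg
        · exact hp1e g hg
        · simp at hg⟩
    | insert _ _ hnot _ =>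
      rename_i v F ih
      intro hsub
      have hvV : v ∈ V := hsub (by simp)
      have hFV : (↑F : Set G) ⊆ V := fun g hg => hsub (by simp [hg])
      obtain ⟨q, hqX, hq⟩ := ih hFV
      set D : Set G := U ∪ W ∪ (↑F : Set G) with hD
      set C' : Set G := (fun h => v * h) ⁻¹' D with hC'
      have h1C' : (1 : G) ∉ C' := by
        simp only [hC', Set.mem_preimage, mul_one]
        rintro (⟨hv | hv⟩ | hv)
        · exact Set.disjoint_left.mp hUV hv hvV
        · exact Set.disjoint_left.mp hVW hvV hv
        · exact hnot hv
      -- shifted configuration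
      have hx'X : (fun h => q (v * h)) ∈ X := by
        have := hshift v⁻¹ q hqX
        simpa using this
      have hiff := hdet C' h1C' (fun h => q (v * h))
        ⟨_, hx'X, fun _ _ => rfl⟩ (w v)
      have hLHS : ∃ z ∈ X, (∀ g ∈ C' ∩ S ^ n, z g = q (v * g)) ∧ z 1 = w v := by
        have hzX : (fun h => p2 (v * h)) ∈ X := by
          have := hshift v⁻¹ p2 hp2X
          simpa using this
        refine ⟨_, hzX, fun g hg => ?_, by simpa using hp2e v (Or.inr hvV)⟩
        obtain ⟨hgC, hgS⟩ := hg
        have hvgD : v * g ∈ D := hgC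
        have hvgWF : v * g ∈ W ∪ (↑F : Set G) := by
          rcases hvgD with hd | hd
          · rcases hd with hd | hd
            · exfalso
              refine hsep (v * g) hd v hvV n (lt_add_one n) ?_
              have : (v * g)⁻¹ * v = g⁻¹ := by group
              rw [this]
              exact inv_mem_pow hSinv hgS
            · exact Or.inl hd
          · exact Or.inr hd
        have h1 : p2 (v * g) = w (v * g) := by
          rcases hvgWF with hd | hd
          · exact hp2e _ (Or.inl hd)
          · exact hp2e _ (Or.inr (hFV hd))
        have h2 : q (v * g) = w (v * g) := hq _ hvgD
        rw [h1, h2]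
      obtain ⟨z, hzX, hzC, hz1⟩ := hiff.mp hLHS
      refine ⟨fun h => z (v⁻¹ * h), hshift v z hzX, fun g hg => ?_⟩
      rw [Finset.coe_insert] at hg
      have : g = v ∨ g ∈ D := by
        rcases hg with hg | hg
        · exact Or.inr (Or.inl hg)
        · rcases hg with hg | hg
          · exact Or.inl hg
          · exact Or.inr (Or.inr hg)
      rcases this with rfl | hgD
      · simpa using hz1
      · have hmem : v⁻¹ * g ∈ C' := by
          simp only [hC', Set.mem_preimage]
          rw [mul_inv_cancel_left]
          exact hgD
        have h3 := hzC _ hmem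
        rw [mul_inv_cancel_left] at h3
        show z (v⁻¹ * g) = w g
        rw [h3]
        exact hq _ hgD
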